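/- If a 2-input-2-output correlation arises from local projective measurements on a pure state |ψ⟩ ∈ ℂ²⊗ℂ² and satisfies Hardy's conditions h(0,1|0,1) = h(1,0|1,0) = h(0,0|1,1) = 0 and h(0,0|0,0) > 0, then |ψ⟩ is entangled (not a product state). -/

import Mathlib

open Kronecker
open Matrix

/-- The correlation ⟨ψ| E ⊗ F |ψ⟩ for a two-qubit pure state ψ. -/
noncomputable def stateCorr (ψ : Fin 2 × Fin 2 → ℂ)
    (E F : Matrix (Fin 2) (Fin 2) ℂ) : ℂ :=
  dotProduct (star ψ) ((E ⊗ₖ F).mulVec ψ)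

/-- A pair of orthogonal projections on ℂ² summing to the identity. -/
def IsProjectivePair (P : Fin 2 → Matrix (Fin 2) (Fin 2) ℂ) : Prop :=
  (∀ a, (P a).IsHermitian) ∧ (∀ a, P a * P a = P a) ∧ P 0 + P 1 = 1

lemma corr_prod (α β : Fin 2 → ℂ) (E F : Matrix (Fin 2) (Fin 2) ℂ) :
    stateCorr (fun p => α p.1 * β p.2) E F
      = (star α ⬝ᵥ E.mulVec α) * (star β ⬝ᵥ F.mulVec β) := by
  simp only [stateCorr, dotProduct, Matrix.mulVec, Matrix.kroneckerMap_apply,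
    Fintype.sum_prod_type, Fin.sum_univ_two, Pi.star_apply, star_mul']
  ring

/-- if a correlation from local projective measurements on a pure
two-qubit state satisfies Hardy's conditions, the state is entangled. -/
theorem hardy_implies_entangled
    (ψ : Fin 2 × Fin 2 → ℂ)
    (hunit : dotProduct (star ψ) ψ = 1)
    (E F : Fin 2 → Fin 2 → Matrix (Fin 2) (Fin 2) ℂ)
    (hE : ∀ x, IsProjectivePair (E x)) (hF : ∀ y, IsProjectivePair (F y))
    (hardy1 : 0 < (stateCorr ψ (E 0 0) (F 0 0)).re)
    (hardy2 : stateCorr ψ (E 0 0) (F 1 1) = 0)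
    (hardy3 : stateCorr ψ (E 1 1) (F 0 0) = 0)
    (hardy4 : stateCorr ψ (E 1 0) (F 1 0) = 0) :
    ¬ ∃ (α β : Fin 2 → ℂ), ψ = fun p => α p.1 * β p.2 := by
  rintro ⟨α, β, rfl⟩
  set a := star α ⬝ᵥ (E 0 0).mulVec α with ha
  set b := star β ⬝ᵥ (F 0 0).mulVec β with hb
  set c := star α ⬝ᵥ (E 1 1).mulVec α with hc
  set d := star β ⬝ᵥ (F 1 1).mulVec β with hd
  set e := star α ⬝ᵥ (E 1 0).mulVec α with he
  set f := star β ⬝ᵥ (F 1 0).mulVec β with hf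
  rw [corr_prod] at hardy1 hardy2 hardy3 hardy4
  have hab : a * b ≠ 0 := fun h => by rw [← ha, ← hb, h] at hardy1; simp at hardy1
  have ha0 : a ≠ 0 := left_ne_zero_of_mul hab
  have hb0 : b ≠ 0 := right_ne_zero_of_mul hab
  have hd0 : d = 0 := by
    rcases mul_eq_zero.mp hardy2 with h | h
    · exact absurd h ha0
    · exact h
  have hc0 : c = 0 := by
    rcases mul_eq_zero.mp hardy3 with h | h
    · exact h
    · exact absurd h hb0
  have hnorm : (star α ⬝ᵥ α) * (star β ⬝ᵥ β) = 1 := by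
    have h1 : stateCorr (fun p => α p.1 * β p.2) 1 1 = 1 := by
      rw [stateCorr, Matrix.one_kronecker_one, Matrix.one_mulVec]; exact hunit
    rw [corr_prod, Matrix.one_mulVec, Matrix.one_mulVec] at h1
    exact h1
  have hesum : e + c = star α ⬝ᵥ α := by
    rw [he, hc, ← dotProduct_add, ← Matrix.add_mulVec, (hE 1).2.2,
      Matrix.one_mulVec]
  have hfsum : f + d = star β ⬝ᵥ β := by
    rw [hf, hd, ← dotProduct_add, ← Matrix.add_mulVec, (hF 1).2.2,
      Matrix.one_mulVec]
  rw [hc0, add_zero] at hesum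
  rw [hd0, add_zero] at hfsum
  rw [← hesum, ← hfsum, hardy4] at hnorm
  exact one_ne_zero hnorm.symm
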